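/- Corollary (case p = 1 of the Main Lemma): Let λ ∈ (0, 1), γ > 0 and t > 0. Then (γ / Γ(λ)) · ∫_0^t (t-s)^{λ-1} · E_λ(γ s^λ) ds ≤ E_λ(γ t^λ). -/

import Mathlib

open MeasureTheory

/-- The Mittag-Leffler function `E_α(x) = ∑_{n=0}^∞ x^n / Γ(nα + 1)`. -/
noncomputable def mittagLeffler (α x : ℝ) : ℝ :=
  ∑' n : ℕ, x ^ n / Real.Gamma ((n : ℝ) * α + 1)


lemma gamma_ratio {y α : ℝ} (hy : 1 < y) (hα : 0 < α) :
    Real.Gamma y * (y - 1) ^ α ≤ Real.Gamma (y + α) := by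
  have h0 : (0:ℝ) < y - 1 := by linarith
  have hy0 : (0:ℝ) < y := by linarith
  have hya : (0:ℝ) < y + α := by linarith
  have hΓy := Real.Gamma_pos_of_pos hy0
  have hΓy1 := Real.Gamma_pos_of_pos h0
  have hΓya := Real.Gamma_pos_of_pos hya
  have hs := Real.convexOn_log_Gamma.slope_mono_adjacent
      (Set.mem_Ioi.mpr h0) (Set.mem_Ioi.mpr hya)
      (by linarith : y - 1 < y) (by linarith : y < y + α)
  simp only [Function.comp] at hs
  have hrec : Real.Gamma y = (y - 1) * Real.Gamma (y - 1) := by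
    have h := Real.Gamma_add_one (ne_of_gt h0)
    rwa [sub_add_cancel] at h
  have hlog : Real.log (Real.Gamma y) - Real.log (Real.Gamma (y-1)) = Real.log (y-1) := by
    rw [hrec, Real.log_mul (ne_of_gt h0) (ne_of_gt hΓy1)]
    ring
  have hd1 : y - (y - 1) = 1 := by ring
  have hd2 : y + α - y = α := by ring
  rw [hd1, hd2, div_one, hlog] at hs
  have hmul : α * Real.log (y - 1) ≤ Real.log (Real.Gamma (y + α)) - Real.log (Real.Gamma y) := by
    rw [le_div_iff₀ hα] at hs
    linarith
  have : Real.log (Real.Gamma y * (y - 1) ^ α) ≤ Real.log (Real.Gamma (y + α)) := by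
    rw [Real.log_mul (ne_of_gt hΓy) (by positivity), Real.log_rpow h0]
    linarith
  exact (Real.log_le_log_iff (by positivity) hΓya).mp this

lemma ml_summable {α : ℝ} (hα : 0 < α) {x : ℝ} (hx : 0 ≤ x) :
    Summable (fun n : ℕ => x ^ n / Real.Gamma ((n : ℝ) * α + 1)) := by
  refine summable_of_ratio_norm_eventually_le (r := 1/2) (by norm_num) ?_
  have h1 : Filter.Tendsto (fun n : ℕ => ((n:ℝ) * α) ^ α) Filter.atTop Filter.atTop :=
    (tendsto_rpow_atTop hα).comp
      (Filter.Tendsto.atTop_mul_const hα tendsto_natCast_atTop_atTop)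
  filter_upwards [h1.eventually_ge_atTop (2 * x), Filter.eventually_ge_atTop 1] with n hn hn1
  have hn1' : (1:ℝ) ≤ (n:ℝ) := by exact_mod_cast hn1
  have hy : 1 < (n:ℝ) * α + 1 := by nlinarith
  have hkey := gamma_ratio hy hα
  have hsimp : (n:ℝ) * α + 1 - 1 = (n:ℝ) * α := by ring
  rw [hsimp] at hkey
  have hΓ1 := Real.Gamma_pos_of_pos (show (0:ℝ) < (n:ℝ)*α+1 by nlinarith)
  have hΓ2 := Real.Gamma_pos_of_pos (show (0:ℝ) < ((n:ℝ)+1)*α+1 by nlinarith)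
  have hcast : ((n+1 : ℕ) : ℝ) = (n:ℝ) + 1 := by push_cast; ring
  have harg : ((n+1 : ℕ) : ℝ) * α + 1 = ((n:ℝ)*α+1) + α := by rw [hcast]; ring
  rw [Real.norm_eq_abs, Real.norm_eq_abs, abs_of_nonneg (by positivity), abs_of_nonneg (by positivity),
    harg]
  rw [show (1/2 : ℝ) * (x ^ n / Real.Gamma ((n:ℝ)*α+1))
      = x ^ n / (2 * Real.Gamma ((n:ℝ)*α+1)) by ring]
  have hΓ2' : 0 < Real.Gamma (((n:ℝ)*α+1) + α) := Real.Gamma_pos_of_pos (by nlinarith)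
  rw [div_le_div_iff₀ hΓ2' (by positivity)]
  calc x ^ (n+1) * (2 * Real.Gamma ((n:ℝ)*α+1))
      = x ^ n * (Real.Gamma ((n:ℝ)*α+1) * (2 * x)) := by ring
    _ ≤ x ^ n * (Real.Gamma ((n:ℝ)*α+1) * ((n:ℝ)*α) ^ α) := by
        gcongr
    _ ≤ x ^ n * Real.Gamma (((n:ℝ)*α+1) + α) := by gcongr


lemma real_beta {a b : ℝ} (ha : 0 < a) (hb : 0 < b) {t : ℝ} (ht : 0 < t) :
    ∫ s in (0:ℝ)..t, s ^ (a-1) * (t - s) ^ (b-1)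
      = t ^ (a+b-1) * (Real.Gamma a * Real.Gamma b / Real.Gamma (a+b)) := by
  have hab : (0:ℝ) < a + b := by linarith
  have hΓab : Real.Gamma (a+b) ≠ 0 := (Real.Gamma_pos_of_pos hab).ne'
  have hbeta : Complex.betaIntegral (a:ℂ) (b:ℂ)
      = ((Real.Gamma a * Real.Gamma b / Real.Gamma (a+b) : ℝ) : ℂ) := by
    have h := Complex.Gamma_mul_Gamma_eq_betaIntegral
      (show 0 < Complex.re (a:ℂ) by simpa using ha)
      (show 0 < Complex.re (b:ℂ) by simpa using hb)
    have hG : Complex.Gamma ((a:ℂ) + (b:ℂ)) = ((Real.Gamma (a+b) : ℝ) : ℂ) := by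
      rw [← Complex.ofReal_add, Complex.Gamma_ofReal]
    have hGa : Complex.Gamma (a:ℂ) = ((Real.Gamma a : ℝ) : ℂ) := Complex.Gamma_ofReal a
    have hGb : Complex.Gamma (b:ℂ) = ((Real.Gamma b : ℝ) : ℂ) := Complex.Gamma_ofReal b
    rw [hG, hGa, hGb] at h
    have hne : ((Real.Gamma (a+b) : ℝ) : ℂ) ≠ 0 := by exact_mod_cast hΓab
    push_cast
    rw [eq_div_iff hne, mul_comm]
    exact h.symm
  have hscaled := Complex.betaIntegral_scaled (a:ℂ) (b:ℂ) ht
  have hlhs : (∫ x in (0:ℝ)..t, (x : ℂ) ^ ((a:ℂ) - 1) * ((t:ℂ) - x) ^ ((b:ℂ) - 1))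
      = ((∫ s in (0:ℝ)..t, s ^ (a-1) * (t - s) ^ (b-1) : ℝ) : ℂ) := by
    rw [← intervalIntegral.integral_ofReal]
    apply intervalIntegral.integral_congr
    intro x hx
    rw [Set.uIcc_of_le ht.le] at hx
    have hx0 : (0:ℝ) ≤ x := hx.1
    have hxt : (0:ℝ) ≤ t - x := by linarith [hx.2]
    push_cast
    rw [Complex.ofReal_cpow hx0, Complex.ofReal_cpow hxt]
    push_cast
    ring
  rw [hlhs, hbeta] at hscaled
  have hrhs : ((t:ℂ) ^ ((a:ℂ) + (b:ℂ) - 1)) = ((t ^ (a+b-1) : ℝ) : ℂ) := by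
    rw [Complex.ofReal_cpow ht.le]
    push_cast
    ring_nf
  rw [hrhs, ← Complex.ofReal_mul] at hscaled
  exact_mod_cast hscaled

lemma integrable_aux {t lam : ℝ} (ht : 0 < t) (h0 : 0 < lam) (h1 : lam < 1) {c : ℝ} (hc : 0 ≤ c) :
    IntervalIntegrable (fun s => s ^ c * (t - s) ^ (lam - 1)) volume 0 t := by
  have h : IntervalIntegrable (fun x : ℝ => (t - x) ^ (lam - 1)) volume 0 t := by
    have h2 := (intervalIntegral.intervalIntegrable_rpow' (a := (0:ℝ)) (b := t)
      (by linarith : (-1:ℝ) < lam - 1)).comp_sub_left t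
    simpa using h2.symm
  exact h.continuousOn_mul ((Real.continuous_rpow_const hc).continuousOn)

/-- Corollary (case `p = 1` of the Main Lemma): for `λ ∈ (0,1)`, `γ > 0`, `t > 0`,
`(γ / Γ(λ)) ∫_0^t (t-s)^{λ-1} E_λ(γ s^λ) ds ≤ E_λ(γ t^λ)`. -/
theorem main_lemma_p_one (lam γ t : ℝ) (hlam : lam ∈ Set.Ioo (0 : ℝ) 1)
    (hγ : 0 < γ) (ht : 0 < t) :
    γ / Real.Gamma lam *
        ∫ s in (0 : ℝ)..t, (t - s) ^ (lam - 1) * mittagLeffler lam (γ * s ^ lam)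
      ≤ mittagLeffler lam (γ * t ^ lam) := by
  obtain ⟨hl0, hl1⟩ := hlam
  have hΓl : 0 < Real.Gamma lam := Real.Gamma_pos_of_pos hl0
  set A : Set ℝ := Set.Ioc 0 t with hA
  set b : ℕ → ℝ := fun n => (γ * t ^ lam) ^ n / Real.Gamma ((n:ℝ) * lam + 1) with hbdef
  have hbnn : ∀ n, 0 ≤ b n := fun n =>
    div_nonneg (pow_nonneg (by positivity) n) (Real.Gamma_pos_of_pos (by positivity)).le
  have hbsum : Summable b := ml_summable hl0 (by positivity)
  set F : ℕ → ℝ → ℝ :=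
    fun n s => (t - s) ^ (lam - 1) * ((γ * s ^ lam) ^ n / Real.Gamma ((n:ℝ)*lam+1)) with hFdef
  set g : ℝ → ℝ := fun s => (t - s) ^ (lam - 1) * mittagLeffler lam (γ * s ^ lam) with hgdef
  have hgF : ∀ s, g s = ∑' n, F n s := by
    intro s
    simp only [hgdef, hFdef, mittagLeffler]
    exact (tsum_mul_left).symm
  have hFnn : ∀ n, ∀ s ∈ A, 0 ≤ F n s := by
    intro n s hs
    have h1 : 0 ≤ t - s := by linarith [hs.2]
    have h3 : (0:ℝ) < Real.Gamma ((n:ℝ)*lam+1) := Real.Gamma_pos_of_pos (by positivity)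
    have h2 : 0 ≤ γ * s ^ lam := mul_nonneg hγ.le (Real.rpow_nonneg hs.1.le _)
    exact mul_nonneg (Real.rpow_nonneg h1 _) (div_nonneg (pow_nonneg h2 _) h3.le)
  have hFmeas : ∀ n, Measurable (F n) := by
    intro n
    simp only [hFdef]
    fun_prop
  have hFsum : ∀ s ∈ A, Summable (fun n => F n s) := by
    intro s hs
    exact (ml_summable hl0 (mul_nonneg hγ.le (Real.rpow_nonneg hs.1.le _))).mul_left _
  have hgnnA : ∀ s ∈ A, 0 ≤ g s := by
    intro s hs
    rw [hgF]
    exact tsum_nonneg (fun n => hFnn n s hs)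
  set G : ℝ → ENNReal := fun s => ∑' n, ENNReal.ofReal (F n s) with hGdef
  have hGmeas : Measurable G := Measurable.ennreal_tsum fun n => (hFmeas n).ennreal_ofReal
  have hGg : ∀ s ∈ A, ENNReal.ofReal (g s) = G s := by
    intro s hs
    rw [hgF]
    exact ENNReal.ofReal_tsum_of_nonneg (fun n => hFnn n s hs) (hFsum s hs)
  have hg_eq : (fun s => (G s).toReal) =ᵐ[volume.restrict A] g := by
    refine (ae_restrict_iff' measurableSet_Ioc).mpr (Filter.Eventually.of_forall fun s hs => ?_)
    show (G s).toReal = g s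
    rw [← hGg s hs, ENNReal.toReal_ofReal (hgnnA s hs)]
  have hg_nn : 0 ≤ᵐ[volume.restrict A] g :=
    (ae_restrict_iff' measurableSet_Ioc).mpr (Filter.Eventually.of_forall hgnnA)
  have hg_aesm : AEStronglyMeasurable g (volume.restrict A) :=
    (hGmeas.ennreal_toReal.aestronglyMeasurable).congr hg_eq
  -- per-n integral values
  have hd : ∀ n : ℕ, IntegrableOn (F n) A volume ∧
      ∫ s in A, F n s = (Real.Gamma lam / γ) * b (n+1) := by
    intro n
    have hc : (0:ℝ) ≤ (n:ℝ) * lam := by positivity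
    have hφint : IntegrableOn (fun s => s ^ ((n:ℝ)*lam) * (t - s) ^ (lam-1)) A volume := by
      rw [hA]
      exact (intervalIntegrable_iff_integrableOn_Ioc_of_le ht.le).mp
        (integrable_aux ht hl0 hl1 hc)
    set k : ℝ := γ ^ n / Real.Gamma ((n:ℝ)*lam+1) with hk
    have heq : ∀ s ∈ A, F n s = k * (s ^ ((n:ℝ)*lam) * (t - s) ^ (lam-1)) := by
      intro s hs
      have hs0 : (0:ℝ) ≤ s := hs.1.le
      have hpow : (γ * s ^ lam) ^ n = γ ^ n * s ^ ((n:ℝ)*lam) := by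
        rw [mul_pow, mul_comm ((n:ℝ)) lam, Real.rpow_mul hs0, Real.rpow_natCast]
      simp only [hFdef, hpow, hk]
      ring
    have hΓn : (0:ℝ) < Real.Gamma ((n:ℝ)*lam+1) := Real.Gamma_pos_of_pos (by positivity)
    constructor
    · exact IntegrableOn.congr_fun (hφint.const_mul k)
        (fun s hs => (heq s hs).symm) measurableSet_Ioc
    · have h1 : ∫ s in A, F n s = ∫ s in A, k * (s ^ ((n:ℝ)*lam) * (t - s) ^ (lam-1)) :=
        setIntegral_congr_fun measurableSet_Ioc heq
      have h2 : ∫ s in A, (s ^ ((n:ℝ)*lam) * (t - s) ^ (lam-1))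
          = ∫ s in (0:ℝ)..t, s ^ ((n:ℝ)*lam) * (t - s) ^ (lam-1) :=
        (intervalIntegral.integral_of_le ht.le).symm
      have hbeta := real_beta (a := (n:ℝ)*lam+1) (b := lam)
        (by positivity) hl0 ht
      have e1 : (n:ℝ)*lam+1-1 = (n:ℝ)*lam := by ring
      have e2 : (n:ℝ)*lam+1+lam-1 = ((n:ℝ)+1)*lam := by ring
      have e3 : (n:ℝ)*lam+1+lam = ((n:ℝ)+1)*lam+1 := by ring
      rw [e1, e2, e3] at hbeta
      rw [h1, integral_const_mul, h2, hbeta]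
      have hbn : b (n+1) = γ ^ (n+1) * t ^ (((n:ℝ)+1)*lam) / Real.Gamma (((n:ℝ)+1)*lam+1) := by
        have ht' : t ^ (((n:ℝ)+1)*lam) = (t ^ lam) ^ (n+1) := by
          rw [← Real.rpow_natCast (t ^ lam) (n+1), ← Real.rpow_mul ht.le]
          push_cast
          ring_nf
        simp only [hbdef, mul_pow, ht']
        push_cast
        ring
      have hΓn1 : (0:ℝ) < Real.Gamma (((n:ℝ)+1)*lam+1) := Real.Gamma_pos_of_pos (by positivity)
      rw [hbn, hk]
      field_simp
      ring
  have hd_nn : ∀ n : ℕ, (0:ℝ) ≤ (Real.Gamma lam / γ) * b (n+1) :=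
    fun n => mul_nonneg (by positivity) (hbnn _)
  have hFae_nn : ∀ n : ℕ, 0 ≤ᵐ[volume.restrict A] F n := fun n =>
    (ae_restrict_iff' measurableSet_Ioc).mpr (Filter.Eventually.of_forall (hFnn n))
  have hlint_n : ∀ n : ℕ, ∫⁻ s in A, ENNReal.ofReal (F n s)
      = ENNReal.ofReal ((Real.Gamma lam / γ) * b (n+1)) := by
    intro n
    rw [← (hd n).2]
    exact (ofReal_integral_eq_lintegral_ofReal (hd n).1 (hFae_nn n)).symm
  have hshift : Summable (fun n => b (n+1)) := (summable_nat_add_iff 1).mpr hbsum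
  have hsum2 : Summable (fun n => (Real.Gamma lam / γ) * b (n+1)) := hshift.mul_left _
  -- compute the integral
  have hint : ∫ s in (0:ℝ)..t, g s = (Real.Gamma lam / γ) * ∑' n, b (n+1) := by
    rw [intervalIntegral.integral_of_le ht.le, ← hA,
      integral_eq_lintegral_of_nonneg_ae hg_nn hg_aesm]
    have hl1' : ∫⁻ s in A, ENNReal.ofReal (g s) = ∫⁻ s in A, G s :=
      lintegral_congr_ae ((ae_restrict_iff' measurableSet_Ioc).mpr
        (Filter.Eventually.of_forall hGg))
    have hl2 : ∫⁻ s in A, G s = ∑' n, ∫⁻ s in A, ENNReal.ofReal (F n s) := by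
      simp only [hGdef]
      exact lintegral_tsum fun n => ((hFmeas n).ennreal_ofReal).aemeasurable
    rw [hl1', hl2]
    simp_rw [hlint_n]
    rw [← ENNReal.ofReal_tsum_of_nonneg hd_nn hsum2,
      ENNReal.toReal_ofReal (tsum_nonneg hd_nn), tsum_mul_left]
  have hT : γ / Real.Gamma lam * ∫ s in (0:ℝ)..t, g s = ∑' n, b (n+1) := by
    rw [hint]
    field_simp
  have hsplit : ∑' n, b n = b 0 + ∑' n, b (n+1) := Summable.tsum_eq_zero_add hbsum
  have hb0 : b 0 = 1 := by
    simp [hbdef, Real.Gamma_one]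
  have hrhs : mittagLeffler lam (γ * t ^ lam) = ∑' n, b n := rfl
  rw [show (∫ s in (0:ℝ)..t, (t - s) ^ (lam - 1) * mittagLeffler lam (γ * s ^ lam))
      = ∫ s in (0:ℝ)..t, g s from rfl, hT, hrhs, hsplit, hb0]
  linarith
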